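/- Let ρ < R be real numbers and p > 1. Let w : ℝ → ℝ be continuously differentiable with w(r) > 0 for all r ∈ [ρ, R], and let g, M : ℝ → ℝ be continuous on [ρ, R] with g(r) > 0 for all r ∈ [ρ, R]. Define Λ(r) = w(r) · exp(−∫_ρ^r M(t)/((p−1) g(t)²) dt) and ψ(r) = (∫_ρ^r Λ(t) dt) / (∫_ρ^R Λ(t) dt) for r ∈ [ρ, R]. If moreover M(r) ≥ 0 for all r ∈ [ρ, R] (the balance condition), then ψ''(r) − ψ'(r) · w'(r)/w(r) ≤ 0 for every r ∈ [ρ, R]. -/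

import Mathlib

open MeasureTheory intervalIntegral

/-- The function `Λ(r) = w(r) · exp(−∫_ρ^r M(t)/((p−1) g(t)²) dt)`. -/
noncomputable def Lam (p : ℝ) (w g M : ℝ → ℝ) (ρ r : ℝ) : ℝ :=
  w r * Real.exp (-(∫ t in ρ..r, M t / ((p - 1) * g t ^ 2)))

/-- The function `ψ(r) = (∫_ρ^r Λ(t) dt) / (∫_ρ^R Λ(t) dt)`. -/
noncomputable def psiSol (p : ℝ) (w g M : ℝ → ℝ) (ρ R r : ℝ) : ℝ :=
  (∫ t in ρ..r, Lam p w g M ρ t) / (∫ t in ρ..R, Lam p w g M ρ t)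

/-- FTC for the within-derivative on a closed interval. -/
lemma ftc_within {f : ℝ → ℝ} {a b : ℝ} (hf : ContinuousOn f (Set.Icc a b))
    {r : ℝ} (hr : r ∈ Set.Icc a b) :
    HasDerivWithinAt (fun u => ∫ x in a..u, f x) (f r) (Set.Icc a b) r := by
  haveI : Fact (r ∈ Set.Icc a b) := ⟨hr⟩
  have hint : IntervalIntegrable f volume a r := by
    apply ContinuousOn.intervalIntegrable
    rw [Set.uIcc_of_le hr.1]
    exact hf.mono (Set.Icc_subset_Icc_right hr.2)
  exact intervalIntegral.integral_hasDerivWithinAt_right hint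
    (hf.stronglyMeasurableAtFilter_nhdsWithin measurableSet_Icc r)
    (hf r hr)

/-- Under the balance condition `M ≥ 0`, the solution
`ψ(r) = (∫_ρ^r Λ)/(∫_ρ^R Λ)` satisfies the concavity-type inequality
`ψ''(r) − ψ'(r)·w'(r)/w(r) ≤ 0` on `[ρ, R]`. -/
theorem psiSol_concavity_of_balance
    (ρ R p : ℝ) (hρR : ρ < R) (hp : 1 < p)
    (w w' g M : ℝ → ℝ)
    (hw : ∀ r, HasDerivAt w (w' r) r) (hw'c : Continuous w')
    (hwpos : ∀ r ∈ Set.Icc ρ R, 0 < w r)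
    (hgc : ContinuousOn g (Set.Icc ρ R)) (hMc : ContinuousOn M (Set.Icc ρ R))
    (hgpos : ∀ r ∈ Set.Icc ρ R, 0 < g r)
    (hMnonneg : ∀ r ∈ Set.Icc ρ R, 0 ≤ M r) :
    ∀ ψ' ψ'' : ℝ → ℝ,
      (∀ r ∈ Set.Icc ρ R,
        HasDerivWithinAt (psiSol p w g M ρ R) (ψ' r) (Set.Icc ρ R) r) →
      (∀ r ∈ Set.Icc ρ R, HasDerivWithinAt ψ' (ψ'' r) (Set.Icc ρ R) r) →
      ∀ r ∈ Set.Icc ρ R, ψ'' r - ψ' r * (w' r / w r) ≤ 0 := by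
  intro ψ' ψ'' hψ' hψ'' r hr
  set s := Set.Icc ρ R with hs
  set h : ℝ → ℝ := fun t => M t / ((p - 1) * g t ^ 2) with hh
  have hp1 : (0:ℝ) < p - 1 := by linarith
  -- h is continuous on s
  have hhc : ContinuousOn h s := by
    apply hMc.div
    · exact (continuousOn_const.mul (hgc.pow 2))
    · intro t ht
      have := hgpos t ht
      positivity
  -- h ≥ 0 on s
  have hhnn : ∀ t ∈ s, 0 ≤ h t := by
    intro t ht
    have h1 := hMnonneg t ht
    have h2 := hgpos t ht
    positivity
  set F : ℝ → ℝ := fun u => ∫ t in ρ..u, h t with hF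
  have hFd : ∀ x ∈ s, HasDerivWithinAt F (h x) s x := fun x hx => ftc_within hhc hx
  have hFc : ContinuousOn F s := fun x hx => (hFd x hx).continuousWithinAt
  -- Λ is continuous on s
  have hLamc : ContinuousOn (Lam p w g M ρ) s := by
    have : ContinuousOn (fun u => w u * Real.exp (-(F u))) s :=
      ((continuousOn_of_forall_continuousAt (fun x _ => (hw x).continuousAt))).mul
        ((Real.continuous_exp.comp_continuousOn hFc.neg))
    exact this
  -- Λ positive on s
  have hLampos : ∀ t ∈ s, 0 < Lam p w g M ρ t := by
    intro t ht
    exact mul_pos (hwpos t ht) (Real.exp_pos _)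
  -- the denominator C
  set C : ℝ := ∫ t in ρ..R, Lam p w g M ρ t with hC
  have hCpos : 0 < C := by
    apply intervalIntegral.intervalIntegral_pos_of_pos_on
    · apply ContinuousOn.intervalIntegrable
      rwa [Set.uIcc_of_le hρR.le]
    · intro x hx
      exact hLampos x ⟨hx.1.le, hx.2.le⟩
    · exact hρR
  -- derivative of Λ within s
  set D : ℝ → ℝ := fun x => w' x * Real.exp (-(F x)) - w x * h x * Real.exp (-(F x)) with hD
  have hLamd : ∀ x ∈ s, HasDerivWithinAt (Lam p w g M ρ) (D x) s x := by
    intro x hx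
    have h1 : HasDerivWithinAt (fun u => Real.exp (-(F u))) (-(h x) * Real.exp (-(F x))) s x := by
      have := (Real.hasDerivAt_exp (-(F x))).comp_hasDerivWithinAt x ((hFd x hx).neg)
      exact this.congr_deriv (by ring)
    have h2 := ((hw x).hasDerivWithinAt (s := s)).mul h1
    have heq : (w * fun u => Real.exp (-(F u))) = Lam p w g M ρ := rfl
    rw [heq] at h2
    exact h2.congr_deriv (by simp only [hD]; ring)
  -- ψ has within-derivative Λ/C
  have hpsid : ∀ x ∈ s, HasDerivWithinAt (psiSol p w g M ρ R) (Lam p w g M ρ x / C) s x := by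
    intro x hx
    have := (ftc_within hLamc hx).div_const C
    exact this
  have hud : UniqueDiffOn ℝ s := uniqueDiffOn_Icc hρR
  -- identify ψ'
  have hψ'eq : ∀ x ∈ s, ψ' x = Lam p w g M ρ x / C := by
    intro x hx
    exact (hud x hx).eq_deriv s (hψ' x hx) (hpsid x hx)
  -- identify ψ''
  have hψ''eq : ψ'' r = D r / C := by
    have h1 : HasDerivWithinAt (fun x => Lam p w g M ρ x / C) (ψ'' r) s r :=
      (hψ'' r hr).congr (fun x hx => (hψ'eq x hx).symm) (hψ'eq r hr).symm
    have h2 : HasDerivWithinAt (fun x => Lam p w g M ρ x / C) (D r / C) s r :=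
      (hLamd r hr).div_const C
    exact (hud r hr).eq_deriv s h1 h2
  rw [hψ''eq, hψ'eq r hr]
  have hwr : w r ≠ 0 := (hwpos r hr).ne'
  have key : D r / C - Lam p w g M ρ r / C * (w' r / w r)
      = -(w r * Real.exp (-(F r)) * h r / C) := by
    simp only [hD, Lam]
    have : -(F r) = -(∫ t in ρ..r, M t / ((p - 1) * g t ^ 2)) := rfl
    field_simp
    ring
  rw [key]
  have : 0 ≤ w r * Real.exp (-(F r)) * h r / C := by
    have := hwpos r hr
    have := hhnn r hr
    have := Real.exp_pos (-(F r))
    positivity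
  linarith
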